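/- arXiv:2211.04358 — 2 statements merged into one kernel-verified Lean document; each statement's English description precedes it below -/
import Mathlib

section
/- Let n ≥ 1 and let L : [0,∞) → ℝ^{n×n} be a measurable, locally essentially bounded matrix-valued function such that for almost every t ≥ 0 the matrix L(t) has nonpositive off-diagonal entries and zero column sums (𝟙ᵀL(t) = 0). Fix s ≥ 0 and let Φ(·,s) : [s,∞) → ℝ^{n×n} be a locally absolutely continuous matrix function with Φ(s,s) = I and dΦ(t,s)/dt = −L(t)Φ(t,s) for almost every t ≥ s. Then for every t ≥ s the matrix Φ(t,s) is column-stochastic, i.e. all entries of Φ(t,s) are nonnegative and each column of Φ(t,s) sums to 1. -/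
open MeasureTheory Matrix

attribute [local instance] Matrix.normedAddCommGroup Matrix.normedSpace

set_option maxHeartbeats 1000000 in
/-- **Column-stochasticity of the transition matrix.**
If `L(t)` has nonpositive off-diagonal entries and zero column sums for a.e. `t ≥ 0`
(measurable, locally essentially bounded), and `Φ(·)` is a (Carathéodory, i.e. continuous
and given by the integral equation) solution of `Φ̇(t) = -L(t)Φ(t)`, `Φ(s) = I`, then
`Φ(t)` is column-stochastic for every `t ≥ s`. -/
theorem transition_matrix_column_stochastic
    (n : ℕ) (hn : 1 ≤ n)
    (L : ℝ → Matrix (Fin n) (Fin n) ℝ)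
    (hLmeas : ∀ i j, Measurable fun t => L t i j)
    (hLbdd : ∀ T : ℝ, ∃ C : ℝ, ∀ᵐ t ∂(volume : Measure ℝ),
      t ∈ Set.Icc (0 : ℝ) T → ∀ i j, |L t i j| ≤ C)
    (hLap : ∀ᵐ t ∂(volume : Measure ℝ), 0 ≤ t →
      (∀ i j, i ≠ j → L t i j ≤ 0) ∧ (∀ j, ∑ i, L t i j = 0))
    (s : ℝ) (hs : 0 ≤ s)
    (Φ : ℝ → Matrix (Fin n) (Fin n) ℝ)
    (hΦcont : ContinuousOn Φ (Set.Ici s))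
    (hΦ : ∀ t, s ≤ t → Φ t = 1 + ∫ τ in s..t, -(L τ) * Φ τ) :
    ∀ t, s ≤ t → (∀ i j, 0 ≤ Φ t i j) ∧ (∀ j, ∑ i, Φ t i j = 1) := by
  letI : MeasurableSpace (Matrix (Fin n) (Fin n) ℝ) :=
    inferInstanceAs (MeasurableSpace (Fin n → Fin n → ℝ))
  letI : BorelSpace (Matrix (Fin n) (Fin n) ℝ) :=
    inferInstanceAs (BorelSpace (Fin n → Fin n → ℝ))
  letI : ENormedAddMonoid (Matrix (Fin n) (Fin n) ℝ) :=
    inferInstanceAs (ENormedAddMonoid (Fin n → Fin n → ℝ))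
  letI : TopologicalSpace.PseudoMetrizableSpace (Matrix (Fin n) (Fin n) ℝ) :=
    inferInstanceAs (TopologicalSpace.PseudoMetrizableSpace (Fin n → Fin n → ℝ))
  letI : SecondCountableTopology (Matrix (Fin n) (Fin n) ℝ) :=
    inferInstanceAs (SecondCountableTopology (Fin n → Fin n → ℝ))
  -- entry-extraction continuous linear maps
  let e : Fin n → Fin n → (Matrix (Fin n) (Fin n) ℝ →L[ℝ] ℝ) := fun i j =>
    (ContinuousLinearMap.proj j : (Fin n → ℝ) →L[ℝ] ℝ).comp
      (ContinuousLinearMap.proj i : (Fin n → Fin n → ℝ) →L[ℝ] (Fin n → ℝ))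
  have he : ∀ (i j : Fin n) (M : Matrix (Fin n) (Fin n) ℝ), e i j M = M i j := fun _ _ _ => rfl
  set G : ℝ → Matrix (Fin n) (Fin n) ℝ := fun τ => -(L τ) * Φ τ with hGdef
  have hΦs : Φ s = 1 := by
    have := hΦ s le_rfl
    rwa [intervalIntegral.integral_same, add_zero] at this
  intro t₀ ht₀
  -- constants
  obtain ⟨C₀, hC₀⟩ := hLbdd t₀
  set C : ℝ := max C₀ 0 with hCdef
  have hC0 : 0 ≤ C := le_max_right _ _
  have hC : ∀ᵐ τ ∂(volume : Measure ℝ), τ ∈ Set.Icc (0:ℝ) t₀ → ∀ i j, |L τ i j| ≤ C := by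
    filter_upwards [hC₀] with τ h hτ i j
    exact le_trans (h hτ i j) (le_max_left _ _)
  obtain ⟨B, hB⟩ := isCompact_Icc.exists_bound_of_continuousOn
    (hΦcont.mono ((Set.Icc_subset_Ici_self : Set.Icc s t₀ ⊆ Set.Ici s)))
  have hB0 : 0 ≤ B := le_trans (norm_nonneg _) (hB s ⟨le_rfl, ht₀⟩)
  have hBij : ∀ τ ∈ Set.Icc s t₀, ∀ k j, |Φ τ k j| ≤ B := by
    intro τ hτ k j
    calc |Φ τ k j| = ‖Φ τ k j‖ := rfl
      _ ≤ ‖Φ τ k‖ := norm_le_pi_norm (Φ τ k) j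
      _ ≤ ‖Φ τ‖ := norm_le_pi_norm (Φ τ) k
      _ ≤ B := hB τ hτ
  -- integrability of G
  have hGm : AEStronglyMeasurable G (volume.restrict (Set.Ioc s t₀)) := by
    have hLm : Measurable L :=
      measurable_pi_lambda _ (fun i => measurable_pi_lambda _ (fun j => hLmeas i j))
    have hΦae : AEMeasurable Φ (volume.restrict (Set.Ioc s t₀)) :=
      (hΦcont.mono (Set.Ioc_subset_Icc_self.trans Set.Icc_subset_Ici_self)).aemeasurable
        measurableSet_Ioc
    have hcont : Continuous (fun p : Matrix (Fin n) (Fin n) ℝ × Matrix (Fin n) (Fin n) ℝ =>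
        -p.1 * p.2) := (continuous_fst.neg).matrix_mul continuous_snd
    exact (hcont.measurable.comp_aemeasurable'
      (hLm.aemeasurable.prodMk hΦae)).aestronglyMeasurable
  have hGint : IntervalIntegrable G volume s t₀ := by
    rw [intervalIntegrable_iff_integrableOn_Ioc_of_le ht₀]
    refine Integrable.mono' (g := fun _ => (n : ℝ) * (C * B))
      ((integrableOn_const_iff).2 (Or.inr measure_Ioc_lt_top)) hGm ?_
    filter_upwards [ae_restrict_of_ae hC, ae_restrict_mem measurableSet_Ioc] with τ hLb hτ
    have hτ' : τ ∈ Set.Icc s t₀ := Set.Ioc_subset_Icc_self hτ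
    have hτ0 : τ ∈ Set.Icc (0:ℝ) t₀ := ⟨le_trans hs (le_of_lt hτ.1), hτ.2⟩
    specialize hLb hτ0
    refine (pi_norm_le_iff_of_nonneg (by positivity)).2 ?_
    intro i
    rw [pi_norm_le_iff_of_nonneg (by positivity)]
    intro j
    have hGij : G τ i j = ∑ k, (-(L τ i k)) * Φ τ k j := by
      simp [hGdef, Matrix.mul_apply]
    rw [Real.norm_eq_abs, hGij]
    calc |∑ k, (-(L τ i k)) * Φ τ k j| ≤ ∑ k, |(-(L τ i k)) * Φ τ k j| :=
          Finset.abs_sum_le_sum_abs _ _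
      _ ≤ ∑ _k : Fin n, C * B := by
          refine Finset.sum_le_sum (fun k _ => ?_)
          rw [abs_mul, abs_neg]
          exact mul_le_mul (hLb i k) (hBij τ hτ' k j) (abs_nonneg _) hC0
      _ = (n : ℝ) * (C * B) := by
          simp [Finset.sum_const, Finset.card_fin]
  have hGsub : ∀ a b, a ∈ Set.Icc s t₀ → b ∈ Set.Icc s t₀ →
      IntervalIntegrable G volume a b := by
    intro a b ha hb
    refine hGint.mono_set ?_
    rw [Set.uIcc_of_le ht₀]
    exact Set.uIcc_subset_Icc ha hb
  have hGeint : ∀ (i j : Fin n) a b, a ∈ Set.Icc s t₀ → b ∈ Set.Icc s t₀ →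
      IntervalIntegrable (fun τ => G τ i j) volume a b := by
    intro i j a b ha hb
    have h := hGsub a b ha hb
    exact ⟨(e i j).integrable_comp h.1, (e i j).integrable_comp h.2⟩
  have hEntry : ∀ a b, a ∈ Set.Icc s t₀ → b ∈ Set.Icc s t₀ → ∀ (i j : Fin n),
      (∫ τ in a..b, G τ) i j = ∫ τ in a..b, G τ i j := by
    intro a b ha hb i j
    exact ((e i j).intervalIntegral_comp_comm (hGsub a b ha hb)).symm
  have hs' : s ∈ Set.Icc s t₀ := ⟨le_rfl, ht₀⟩
  have ht₀' : t₀ ∈ Set.Icc s t₀ := ⟨ht₀, le_rfl⟩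
  constructor
  · -- nonnegativity
    -- the maximal negative part
    set nm : ℝ → ℝ := fun u => ‖(fun p : Fin n × Fin n => max (-(Φ u p.1 p.2)) 0)‖ with hnmdef
    have hnm0 : ∀ u, 0 ≤ nm u := fun u => norm_nonneg _
    have hval : ∀ u i j, -(Φ u i j) ≤ nm u := by
      intro u i j
      have h1 : ‖max (-(Φ u i j)) 0‖ ≤ nm u :=
        norm_le_pi_norm (fun p : Fin n × Fin n => max (-(Φ u p.1 p.2)) 0) (i, j)
      rw [Real.norm_eq_abs, abs_of_nonneg (le_max_right _ _)] at h1
      exact le_trans (le_max_left _ _) h1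
    have hnmle : ∀ u r, 0 ≤ r → (∀ i j, -(Φ u i j) ≤ r) → nm u ≤ r := by
      intro u r hr h
      rw [hnmdef]
      rw [pi_norm_le_iff_of_nonneg hr]
      intro p
      rw [Real.norm_eq_abs, abs_of_nonneg (le_max_right _ _)]
      exact max_le (h p.1 p.2) hr
    have hnmcont : ContinuousOn nm (Set.Ici s) := by
      have hc : Continuous (fun M : Matrix (Fin n) (Fin n) ℝ =>
          ‖(fun p : Fin n × Fin n => max (-(M p.1 p.2)) 0)‖) :=
        (continuous_pi (fun p : Fin n × Fin n =>
          ((e p.1 p.2).continuous.neg.max continuous_const))).norm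
      exact hc.comp_continuousOn hΦcont
    have hnmint : ∀ a b, a ∈ Set.Icc s t₀ → b ∈ Set.Icc s t₀ →
        IntervalIntegrable nm volume a b := by
      intro a b ha hb
      refine (hnmcont.mono ?_).intervalIntegrable
      intro x hx
      exact le_trans (le_min ha.1 hb.1) hx.1
    obtain ⟨M, hM⟩ := isCompact_Icc.exists_bound_of_continuousOn
      (hnmcont.mono ((Set.Icc_subset_Ici_self : Set.Icc s t₀ ⊆ Set.Ici s)))
    have hM' : ∀ x ∈ Set.Icc s t₀, nm x ≤ M := by
      intro x hx
      have := hM x hx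
      rwa [Real.norm_eq_abs, abs_of_nonneg (hnm0 x)] at this
    set K : ℝ := (n : ℝ) * C with hKdef
    have hK0 : 0 ≤ K := by positivity
    -- the key Grönwall-type integral inequality
    have hkey : ∀ u ∈ Set.Icc s t₀, nm u ≤ K * ∫ τ in s..u, nm τ := by
      intro u hu
      have hsu : s ≤ u := hu.1
      have hIpos : 0 ≤ ∫ τ in s..u, nm τ :=
        intervalIntegral.integral_nonneg hsu (fun x _ => hnm0 x)
      refine hnmle u _ (by positivity) ?_
      intro i j
      by_cases hΦpos : 0 ≤ Φ u i j
      · have : 0 ≤ K * ∫ τ in s..u, nm τ := mul_nonneg hK0 hIpos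
        linarith
      push_neg at hΦpos
      set Sv : Set ℝ := Set.Icc s u ∩ (fun r => Φ r i j) ⁻¹' Set.Ici 0 with hSvdef
      have hfcont : ContinuousOn (fun r => Φ r i j) (Set.Icc s u) :=
        (e i j).continuous.comp_continuousOn (hΦcont.mono Set.Icc_subset_Ici_self)
      have hSclosed : IsClosed Sv :=
        hfcont.preimage_isClosed_of_isClosed isClosed_Icc isClosed_Ici
      have hSne : Sv.Nonempty := by
        refine ⟨s, ⟨le_rfl, hsu⟩, ?_⟩
        show (0:ℝ) ≤ Φ s i j
        rw [hΦs, Matrix.one_apply]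
        split <;> norm_num
      have hSbdd : BddAbove Sv := ⟨u, fun r hr => hr.1.2⟩
      set v : ℝ := sSup Sv with hvdef
      have hvmem : v ∈ Sv := hSclosed.csSup_mem hSne hSbdd
      have hvs : s ≤ v := hvmem.1.1
      have hvu : v ≤ u := hvmem.1.2
      have hΦv : 0 ≤ Φ v i j := hvmem.2
      have hneg : ∀ r, v < r → r ≤ u → Φ r i j ≤ 0 := by
        intro r h1 h2
        by_contra hcon
        push_neg at hcon
        exact absurd (le_csSup hSbdd ⟨⟨le_trans hvs (le_of_lt h1), h2⟩, le_of_lt hcon⟩)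
          (not_le.2 h1)
      have hv' : v ∈ Set.Icc s t₀ := ⟨hvs, le_trans hvu hu.2⟩
      have hdiff : Φ u i j - Φ v i j = ∫ τ in v..u, G τ i j := by
        rw [hΦ u hsu, hΦ v hvs]
        simp only [Matrix.add_apply]
        rw [hEntry s u hs' hu i j, hEntry s v hs' hv' i j]
        have : (1:Matrix (Fin n) (Fin n) ℝ) i j + (∫ τ in s..u, G τ i j)
            - ((1:Matrix (Fin n) (Fin n) ℝ) i j + ∫ τ in s..v, G τ i j)
            = (∫ τ in s..u, G τ i j) - ∫ τ in s..v, G τ i j := by ring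
        rw [this]
        exact intervalIntegral.integral_interval_sub_left
          (hGeint i j s u hs' hu) (hGeint i j s v hs' hv')
      have hbnd : ∀ᵐ τ ∂volume.restrict (Set.Icc v u),
          -(K * nm τ) ≤ G τ i j := by
        have hne_v : ∀ᵐ τ ∂volume.restrict (Set.Icc v u), τ ≠ v := by
          refine ae_restrict_of_ae ?_
          rw [ae_iff]
          simpa using measure_singleton v
        filter_upwards [ae_restrict_of_ae hC, ae_restrict_of_ae hLap,
          ae_restrict_mem measurableSet_Icc, hne_v] with τ hLb hLa hτ hτv
        have hτs : s ≤ τ := le_trans hvs hτ.1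
        have hτ0 : (0:ℝ) ≤ τ := le_trans hs hτs
        have hτt₀ : τ ≤ t₀ := le_trans hτ.2 hu.2
        specialize hLb ⟨hτ0, hτt₀⟩
        obtain ⟨hoff, -⟩ := hLa hτ0
        have hΦτ : Φ τ i j ≤ 0 := hneg τ (lt_of_le_of_ne hτ.1 (Ne.symm hτv)) hτ.2
        have hGτ : G τ i j = ∑ k, (-(L τ i k)) * Φ τ k j := by
          simp [hGdef, Matrix.mul_apply]
        rw [hGτ]
        calc -(K * nm τ) = ∑ _k : Fin n, -(C * nm τ) := by
              simp [Finset.sum_const, Finset.card_fin, hKdef]; ring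
          _ ≤ ∑ k, (-(L τ i k)) * Φ τ k j := by
              refine Finset.sum_le_sum (fun k _ => ?_)
              have hmk : -(Φ τ k j) ≤ nm τ := hval τ k j
              by_cases hki : Φ τ k j ≤ 0
              · have hle : -(L τ i k) ≤ C := by
                  have := abs_le.1 (hLb i k); linarith [this.1]
                calc -(C * nm τ) = C * (-(nm τ)) := by ring
                  _ ≤ C * Φ τ k j := mul_le_mul_of_nonneg_left (neg_le.1 hmk) hC0
                  _ ≤ (-(L τ i k)) * Φ τ k j := mul_le_mul_of_nonpos_right hle hki
              · have hki' : k ≠ i := by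
                  intro h; subst h; exact hki hΦτ
                have h0 : 0 ≤ -(L τ i k) := neg_nonneg.2 (hoff i k (fun h => hki' h.symm))
                have hle : -(L τ i k) ≤ C := le_trans (le_abs_self _)
                  (by rw [abs_neg]; exact hLb i k)
                calc -(C * nm τ) = C * (-(nm τ)) := by ring
                  _ ≤ (-(L τ i k)) * (-(nm τ)) :=
                      mul_le_mul_of_nonpos_right hle (neg_nonpos.2 (hnm0 τ))
                  _ ≤ (-(L τ i k)) * Φ τ k j :=
                      mul_le_mul_of_nonneg_left (neg_le.1 hmk) h0
      have h1 : ∫ τ in v..u, -(K * nm τ) ≤ ∫ τ in v..u, G τ i j := by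
        refine intervalIntegral.integral_mono_ae_restrict hvu ?_ (hGeint i j v u hv' hu) hbnd
        exact ((hnmint v u hv' hu).const_mul K).neg
      have h2 : ∫ τ in v..u, -(K * nm τ) = -(K * ∫ τ in v..u, nm τ) := by
        rw [intervalIntegral.integral_neg, intervalIntegral.integral_const_mul]
      have h3 : (∫ τ in s..v, nm τ) + ∫ τ in v..u, nm τ = ∫ τ in s..u, nm τ :=
        intervalIntegral.integral_add_adjacent_intervals (hnmint s v hs' hv') (hnmint v u hv' hu)
      have h4 : 0 ≤ ∫ τ in s..v, nm τ :=
        intervalIntegral.integral_nonneg hvs (fun x _ => hnm0 x)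
      have h5 : K * (∫ τ in v..u, nm τ) ≤ K * ∫ τ in s..u, nm τ :=
        mul_le_mul_of_nonneg_left (by linarith) hK0
      linarith [hdiff, hΦv, h1, h2, h5]
    -- iterate the inequality
    have hiter : ∀ N : ℕ, ∀ u ∈ Set.Icc s t₀,
        nm u ≤ M * (K * (u - s)) ^ N / (N.factorial : ℝ) := by
      intro N
      induction N with
      | zero => intro u hu; simpa using hM' u hu
      | succ N ih =>
        intro u hu
        have hsu : s ≤ u := hu.1
        have hstep : ∫ τ in s..u, nm τ ≤ ∫ τ in s..u,
            (M * K ^ N / (N.factorial : ℝ)) * (τ - s) ^ N := by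
          refine intervalIntegral.integral_mono_on hsu (hnmint s u hs' hu) ?_ ?_
          · exact (Continuous.intervalIntegrable (by continuity) _ _)
          · intro x hx
            have := ih x ⟨hx.1, le_trans hx.2 hu.2⟩
            calc nm x ≤ M * (K * (x - s)) ^ N / (N.factorial : ℝ) := this
              _ = (M * K ^ N / (N.factorial : ℝ)) * (x - s) ^ N := by
                  rw [mul_pow]; ring
        have hpow : ∫ τ in s..u, (τ - s) ^ N = (u - s) ^ (N + 1) / ((N : ℝ) + 1) := by
          have h := intervalIntegral.integral_comp_sub_right (a := s) (b := u)
            (fun x => x ^ N) s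
          rw [h, sub_self, integral_pow]
          rw [zero_pow (Nat.succ_ne_zero N)]
          ring
        have hfac : (N.factorial : ℝ) ≠ 0 := Nat.cast_ne_zero.mpr N.factorial_ne_zero
        calc nm u ≤ K * ∫ τ in s..u, nm τ := hkey u hu
          _ ≤ K * ∫ τ in s..u, (M * K ^ N / (N.factorial : ℝ)) * (τ - s) ^ N :=
              mul_le_mul_of_nonneg_left hstep hK0
          _ = K * ((M * K ^ N / (N.factorial : ℝ)) * ((u - s) ^ (N + 1) / ((N : ℝ) + 1))) := by
              rw [intervalIntegral.integral_const_mul, hpow]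
          _ = M * (K * (u - s)) ^ (N + 1) / ((N + 1).factorial : ℝ) := by
              have hfs : (((N+1).factorial : ℕ) : ℝ) = ((N:ℝ)+1) * (N.factorial : ℝ) := by
                rw [Nat.factorial_succ]; push_cast; ring
              have halg : ∀ KK xx FF : ℝ, FF ≠ 0 →
                  KK * ((M * KK ^ N / FF) * (xx ^ (N+1) / ((N:ℝ)+1)))
                    = M * (KK * xx) ^ (N+1) / (((N:ℝ)+1) * FF) := by
                intro KK xx FF hFF
                have hN1 : ((N:ℝ)+1) ≠ 0 := by positivity
                field_simp
                ring
              rw [hfs]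
              exact halg K (u - s) (N.factorial : ℝ) hfac
    intro i j
    have htend : Filter.Tendsto (fun N : ℕ => M * (K * (t₀ - s)) ^ N / (N.factorial : ℝ))
        Filter.atTop (nhds 0) := by
      have h0 := (FloorSemiring.tendsto_pow_div_factorial_atTop (K * (t₀ - s))).const_mul M
      rw [mul_zero] at h0
      simpa [mul_div_assoc] using h0
    have hle0 : nm t₀ ≤ 0 :=
      ge_of_tendsto htend (Filter.Eventually.of_forall (fun N => hiter N t₀ ht₀'))
    have := hval t₀ i j
    linarith
  · -- column sums
    intro j
    have key : ∀ i, Φ t₀ i j = (1:Matrix (Fin n) (Fin n) ℝ) i j + ∫ τ in s..t₀, G τ i j := by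
      intro i
      rw [hΦ t₀ ht₀, Matrix.add_apply, hEntry s t₀ hs' ht₀' i j]
    have hone : ∑ i, ((1:Matrix (Fin n) (Fin n) ℝ) i j) = 1 := by
      simp [Matrix.one_apply]
    have hzero : ∫ τ in s..t₀, ∑ i, G τ i j = 0 := by
      rw [← intervalIntegral.integral_zero (a := s) (b := t₀) (μ := volume) (E := ℝ)]
      refine intervalIntegral.integral_congr_ae ?_
      filter_upwards [hLap] with τ hLa hτ
      have hτ0 : (0:ℝ) ≤ τ := by
        rcases Set.mem_uIoc.1 hτ with h | h
        · exact le_trans hs (le_of_lt h.1)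
        · exact le_trans (le_trans hs ht₀) (le_of_lt h.1)
      obtain ⟨-, hcol⟩ := hLa hτ0
      have hrow : ∀ i, G τ i j = ∑ k, (-(L τ i k)) * Φ τ k j := by
        intro i; simp [hGdef, Matrix.mul_apply]
      calc ∑ i, G τ i j = ∑ i, ∑ k, (-(L τ i k)) * Φ τ k j :=
            Finset.sum_congr rfl (fun i _ => hrow i)
        _ = ∑ k, ∑ i, (-(L τ i k)) * Φ τ k j := Finset.sum_comm
        _ = ∑ k, (∑ i, -(L τ i k)) * Φ τ k j := by
            refine Finset.sum_congr rfl (fun k _ => ?_)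
            rw [Finset.sum_mul]
        _ = 0 := by
            refine Finset.sum_eq_zero (fun k _ => ?_)
            have hz : ∑ i, -(L τ i k) = 0 := by
              have := hcol k
              simpa using congrArg Neg.neg this
            rw [hz, zero_mul]
    calc ∑ i, Φ t₀ i j
        = ∑ i, ((1:Matrix (Fin n) (Fin n) ℝ) i j + ∫ τ in s..t₀, G τ i j) :=
          Finset.sum_congr rfl (fun i _ => key i)
      _ = 1 + ∑ i, ∫ τ in s..t₀, G τ i j := by rw [Finset.sum_add_distrib, hone]
      _ = 1 + ∫ τ in s..t₀, ∑ i, G τ i j := by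
          rw [intervalIntegral.integral_finset_sum (fun i _ => hGeint i j s t₀ hs' ht₀')]
      _ = 1 := by rw [hzero, add_zero]
end

section
/- Let f₁, f₂ : ℝ → ℝ be defined by f₁(z) = (1/2)(z−1)² and f₂(z) = (1/2)(z+1)². Then the unique minimizer of f₁ + f₂ is z = 0; moreover, for every constant step-size α > 0, every differentiable solution x : [0,∞) → ℝ² of the averaging-based distributed optimization dynamics ẋ(t) = [[−1−α,1],[1,−1−α]]x(t) + α(1,−1)ᵀ converges to (α/(2+α))·(1,−1)ᵀ, whose components α/(2+α) and −α/(2+α) are both different from the minimizer 0. Hence for no constant α > 0 do the agents' states converge to the minimizer of f₁ + f₂. -/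
open Matrix Filter

lemma linODE_tendsto {u : ℝ → ℝ} {c b : ℝ} (hc : c < 0)
    (h : ∀ t, 0 ≤ t → HasDerivWithinAt u (c * u t + b) (Set.Ici (0:ℝ)) t) :
    Tendsto u atTop (nhds (-b / c)) := by
  have hc0 : c ≠ 0 := ne_of_lt hc
  set L : ℝ := -b / c with hL
  have key : ∀ t, 0 ≤ t → u t = (u 0 - L) * Real.exp (c * t) + L := by
    intro t ht
    set g : ℝ → ℝ := fun s => Real.exp (-c * s) * (u s - L) with hg
    have hderiv : ∀ s ∈ Set.Ico (0:ℝ) t, HasDerivWithinAt g 0 (Set.Ici s) s := by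
      intro s hs
      have h1 : HasDerivWithinAt (fun s => Real.exp (-c * s)) (-c * Real.exp (-c * s))
          (Set.Ici s) s := by
        have := (HasDerivAt.exp ((hasDerivAt_id s).const_mul (-c))).hasDerivWithinAt
          (s := Set.Ici s)
        simpa [mul_comm] using this
      have h2 : HasDerivWithinAt (fun s => u s - L) (c * u s + b) (Set.Ici s) s :=
        ((h s hs.1).mono (Set.Ici_subset_Ici.2 hs.1)).sub_const L
      have := h1.mul h2
      have hcl : c * L = -b := by
        rw [hL]
        field_simp
      have hz : -c * Real.exp (-c * s) * (u s - L) + Real.exp (-c * s) * (c * u s + b) = 0 := by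
        linear_combination Real.exp (-c * s) * hcl
      show HasDerivWithinAt (fun y => Real.exp (-c * y) * (u y - L)) 0 (Set.Ici s) s
      exact hz ▸ this
    have hcont : ContinuousOn g (Set.Icc 0 t) := by
      intro s hs
      have : ContinuousWithinAt g (Set.Ici (0:ℝ)) s := by
        exact (Real.continuous_exp.comp (continuous_const.mul continuous_id)).continuousWithinAt.mul
          (((h s hs.1).continuousWithinAt).sub continuousWithinAt_const)
      exact this.mono (Set.Icc_subset_Ici_self)
    have := constant_of_has_deriv_right_zero hcont hderiv t ⟨ht, le_refl t⟩
    have hg0 : g 0 = u 0 - L := by simp [hg]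
    have hgt : Real.exp (-c * t) * (u t - L) = u 0 - L := by
      rw [← hg0]; exact this
    have hne : Real.exp (-c * t) ≠ 0 := (Real.exp_pos _).ne'
    have h3 : (u 0 - L) * Real.exp (c * t) = u t - L := by
      have := congrArg (fun z => z * Real.exp (c * t)) hgt
      simpa [mul_assoc, ← Real.exp_add, mul_comm, mul_left_comm] using this.symm
    linarith [h3]
  have hexp : Tendsto (fun t => (u 0 - L) * Real.exp (c * t) + L) atTop (nhds L) := by
    have : Tendsto (fun t : ℝ => c * t) atTop atBot :=
      tendsto_id.const_mul_atTop_of_neg hc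
    have h2 : Tendsto (fun t => Real.exp (c * t)) atTop (nhds 0) :=
      Real.tendsto_exp_atBot.comp this
    have := (h2.const_mul (u 0 - L)).add_const L
    simpa using this
  refine hexp.congr' ?_
  filter_upwards [eventually_ge_atTop 0] with t ht using (key t ht).symm

/-- **Failure of convergence to the optimizer with constant step-size.**
For `f₁(z) = ½(z-1)²`, `f₂(z) = ½(z+1)²`, the unique minimizer of `f₁ + f₂` is `0`;
for every constant step-size `α > 0`, every differentiable solution of
`ẋ = [[-1-α,1],[1,-1-α]]x + α(1,-1)ᵀ` on `[0,∞)` converges to `(α/(2+α))·(1,-1)ᵀ`,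
whose components `α/(2+α)` and `-α/(2+α)` are nonzero; hence the agents' states do not
converge to the minimizer `(0,0)`. -/
theorem constant_stepsize_misses_optimizer
    (f₁ f₂ : ℝ → ℝ)
    (hf₁ : ∀ z, f₁ z = (1/2) * (z - 1)^2) (hf₂ : ∀ z, f₂ z = (1/2) * (z + 1)^2) :
    ((∀ z, f₁ 0 + f₂ 0 ≤ f₁ z + f₂ z) ∧
      (∀ z, (∀ y, f₁ z + f₂ z ≤ f₁ y + f₂ y) → z = 0)) ∧
    (∀ α : ℝ, 0 < α → ∀ x : ℝ → Fin 2 → ℝ,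
      (∀ t : ℝ, 0 ≤ t →
        HasDerivWithinAt x
          ((!![-1 - α, 1; 1, -1 - α]).mulVec (x t) + α • ![1, -1]) (Set.Ici (0:ℝ)) t) →
      (Tendsto x atTop (nhds ((α / (2 + α)) • ![1, -1])) ∧
        ((α / (2 + α)) • ![(1:ℝ), -1]) 0 ≠ 0 ∧ ((α / (2 + α)) • ![(1:ℝ), -1]) 1 ≠ 0 ∧
        ¬ Tendsto x atTop (nhds (fun _ : Fin 2 => (0:ℝ))))) := by
  constructor
  · constructor
    · intro z; rw [hf₁, hf₂, hf₁, hf₂]; nlinarith [sq_nonneg z]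
    · intro z hz
      have := hz 0
      rw [hf₁ z, hf₂ z, hf₁ 0, hf₂ 0] at this
      nlinarith [sq_nonneg z]
  · intro α hα x hx
    have hα2 : (0:ℝ) < 2 + α := by linarith
    have hpos : 0 < α / (2 + α) := div_pos hα hα2
    have hcomp := fun (i : Fin 2) (t : ℝ) (ht : 0 ≤ t) => (hasDerivWithinAt_pi.mp (hx t ht)) i
    have h0 : ∀ t, 0 ≤ t → HasDerivWithinAt (fun t => x t 0)
        ((-1 - α) * x t 0 + x t 1 + α) (Set.Ici (0:ℝ)) t := by
      intro t ht
      have h := hcomp 0 t ht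
      refine h.congr_deriv ?_
      simp [Matrix.mulVec, dotProduct, Fin.sum_univ_two] <;> ring
    have h1 : ∀ t, 0 ≤ t → HasDerivWithinAt (fun t => x t 1)
        (x t 0 + (-1 - α) * x t 1 - α) (Set.Ici (0:ℝ)) t := by
      intro t ht
      have h := hcomp 1 t ht
      refine h.congr_deriv ?_
      simp [Matrix.mulVec, dotProduct, Fin.sum_univ_two] <;> ring
    have hu : Tendsto (fun t => x t 0 + x t 1) atTop (nhds (-(0:ℝ) / -α)) := by
      apply linODE_tendsto (by linarith : -α < 0)
      intro t ht
      have h := (h0 t ht).add (h1 t ht)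
      refine h.congr_deriv ?_
      ring
    have hv : Tendsto (fun t => x t 0 - x t 1) atTop (nhds (-(2*α) / -(2 + α))) := by
      apply linODE_tendsto (by linarith : -(2 + α) < 0)
      intro t ht
      have h := (h0 t ht).sub (h1 t ht)
      refine h.congr_deriv ?_
      ring
    have hu' : Tendsto (fun t => x t 0 + x t 1) atTop (nhds 0) := by
      have : -(0:ℝ) / -α = 0 := by simp
      rwa [this] at hu
    have hv' : Tendsto (fun t => x t 0 - x t 1) atTop (nhds (2*α / (2 + α))) := by
      have : -(2*α) / -(2 + α) = 2*α / (2 + α) := by rw [neg_div_neg_eq]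
      rwa [this] at hv
    have hx0 : Tendsto (fun t => x t 0) atTop (nhds (α / (2 + α))) := by
      have h := (hu'.add hv').div_const 2
      have he : (0 + 2*α / (2 + α)) / 2 = α / (2 + α) := by
        field_simp
        ring
      rw [he] at h
      refine h.congr fun t => by ring
    have hx1 : Tendsto (fun t => x t 1) atTop (nhds (-(α / (2 + α)))) := by
      have h := (hu'.sub hv').div_const 2
      have he : (0 - 2*α / (2 + α)) / 2 = -(α / (2 + α)) := by
        field_simp
        ring
      rw [he] at h
      refine h.congr fun t => by ring
    have hxlim : Tendsto x atTop (nhds ((α / (2 + α)) • ![1, -1])) := by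
      rw [tendsto_pi_nhds]
      intro i
      fin_cases i
      · simpa using hx0
      · simpa using hx1
    refine ⟨hxlim, by simp [hpos.ne'], by simpa using hpos.ne', ?_⟩
    intro hbad
    have := congrFun (tendsto_nhds_unique hbad hxlim) 0
    simp at this
    exact hpos.ne' this.symm
end
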